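/- Let q > 1 and let a be a dominant ordered q-increasing (d+1)-dimensional sequence of length n. Let S be a nonempty subset of {1,...,d} and let τ ∈ S be the ⊢-greatest element of S (that is, s ⊢ τ for every s ∈ S with s ≠ τ). Suppose for every s ∈ S integers i_s, j_s ∈ {1,...,n} are given such that |i_τ - j_τ| ≥ |S|, and i_s ≤ i_t and j_s ≤ j_t whenever s < t with s,t ∈ S. Then Π_{s ∈ S} f_a(s, i_s, j_s) > q if i_τ < j_τ, and Π_{s ∈ S} f_a(s, i_s, j_s) < 1/q if i_τ > j_τ. -/

import Mathlib

/-- A `(d+1)`-dimensional sequence is ordered `q`-increasing: every coordinate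
sequence is positive and for every `t` the sequence of ratios of the `(t+1)`-st
to the `t`-th coordinate sequence is `q`-increasing. -/
def OrdQInc (q : ℝ) {d n : ℕ} (a : Fin n → Fin (d + 1) → ℝ) : Prop :=
  (∀ i t, 0 < a i t) ∧
  ∀ t : Fin d, ∀ i : Fin n, ∀ h : (i : ℕ) + 1 < n,
    a ⟨(i : ℕ) + 1, h⟩ t.succ / a ⟨(i : ℕ) + 1, h⟩ t.castSucc >
      q * (a i t.succ / a i t.castSucc)

/-- `fseq a t i j` is the increase `f_a(t,i,j)` of the ratio of the `(t+1)`-st and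
`t`-th coordinate sequences from position `i` to position `j`. -/
noncomputable def fseq {d n : ℕ} (a : Fin n → Fin (d + 1) → ℝ) (t : Fin d) (i j : Fin n) : ℝ :=
  (a j t.succ * a i t.castSucc) / (a j t.castSucc * a i t.succ)

/-- `a` is left-dominant: for each pair of distinct `s,t`, the position of
`f_a(t,i,j)/f_a(s,j,k)` relative to the interval `[1/q, q]` is the same for all
triples `i < j < k`. -/
def LeftDominant (q : ℝ) {d n : ℕ} (a : Fin n → Fin (d + 1) → ℝ) : Prop :=
  ∀ s t : Fin d, s ≠ t →
    (∀ i j k : Fin n, i < j → j < k → fseq a t i j / fseq a s j k < 1 / q) ∨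
    (∀ i j k : Fin n, i < j → j < k → fseq a t i j / fseq a s j k ∈ Set.Icc (1 / q) q) ∨
    (∀ i j k : Fin n, i < j → j < k → q < fseq a t i j / fseq a s j k)

/-- `a` is right-dominant: for each pair of distinct `s,t`, the position of
`f_a(t,j,k)/f_a(s,i,j)` relative to the interval `[1/q, q]` is the same for all
triples `i < j < k`. -/
def RightDominant (q : ℝ) {d n : ℕ} (a : Fin n → Fin (d + 1) → ℝ) : Prop :=
  ∀ s t : Fin d, s ≠ t →
    (∀ i j k : Fin n, i < j → j < k → fseq a t j k / fseq a s i j < 1 / q) ∨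
    (∀ i j k : Fin n, i < j → j < k → fseq a t j k / fseq a s i j ∈ Set.Icc (1 / q) q) ∨
    (∀ i j k : Fin n, i < j → j < k → q < fseq a t j k / fseq a s i j)

/-- The relation `t ≺ s`: for all `i < j < k`, `q·f_a(t,j,k) < f_a(s,i,j)` and
`q·f_a(t,i,j) < f_a(s,j,k)`. -/
def Prec (q : ℝ) {d n : ℕ} (a : Fin n → Fin (d + 1) → ℝ) (t s : Fin d) : Prop :=
  t ≠ s ∧ ∀ i j k : Fin n, i < j → j < k →
    q * fseq a t j k < fseq a s i j ∧ q * fseq a t i j < fseq a s j k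

/-- The relation `t ∼_l s` (left similar): for all `i < j < k`,
`f_a(t,i,j) > q·f_a(s,j,k)` and `f_a(s,i,j) > q·f_a(t,j,k)`. -/
def SimL (q : ℝ) {d n : ℕ} (a : Fin n → Fin (d + 1) → ℝ) (t s : Fin d) : Prop :=
  t ≠ s ∧ ∀ i j k : Fin n, i < j → j < k →
    fseq a t i j > q * fseq a s j k ∧ fseq a s i j > q * fseq a t j k

/-- The relation `t ∼_r s` (right similar): for all `i < j < k`,
`f_a(t,j,k) > q·f_a(s,i,j)` and `f_a(s,j,k) > q·f_a(t,i,j)`. -/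
def SimR (q : ℝ) {d n : ℕ} (a : Fin n → Fin (d + 1) → ℝ) (t s : Fin d) : Prop :=
  t ≠ s ∧ ∀ i j k : Fin n, i < j → j < k →
    fseq a t j k > q * fseq a s i j ∧ fseq a s j k > q * fseq a t i j

/-- The relation `t ∼ s`: `t = s`, or `t ∼_l s`, or `t ∼_r s`. -/
def Sim (q : ℝ) {d n : ℕ} (a : Fin n → Fin (d + 1) → ℝ) (t s : Fin d) : Prop :=
  t = s ∨ SimL q a t s ∨ SimR q a t s

/-- The relation `t ⊢ s`: `t ≺ s`, or (`t ∼_r s` and `t < s`), or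
(`t ∼_l s` and `t > s`). -/
def Vdash (q : ℝ) {d n : ℕ} (a : Fin n → Fin (d + 1) → ℝ) (t s : Fin d) : Prop :=
  Prec q a t s ∨ (SimR q a t s ∧ t < s) ∨ (SimL q a t s ∧ s < t)

section helpers
variable {q : ℝ} {d n : ℕ} {a : Fin n → Fin (d + 1) → ℝ}

private lemma rr_lt_aux (hq : 1 < q) (ha : OrdQInc q a) (t : Fin d) :
    ∀ (jv : ℕ) (hj : jv < n) (i : Fin n), (i : ℕ) < jv →
      q * (a i t.succ / a i t.castSucc) < a ⟨jv, hj⟩ t.succ / a ⟨jv, hj⟩ t.castSucc := by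
  intro jv
  induction jv with
  | zero => intro hj i hi; omega
  | succ k ih =>
    intro hj i hi
    have hk : k < n := Nat.lt_of_succ_lt hj
    have hstep : q * (a ⟨k, hk⟩ t.succ / a ⟨k, hk⟩ t.castSucc) <
        a ⟨k + 1, hj⟩ t.succ / a ⟨k + 1, hj⟩ t.castSucc := by
      have := ha.2 t ⟨k, hk⟩ (by simpa using hj)
      simpa using this
    rcases Nat.lt_or_ge (i : ℕ) k with h | h
    · have h1 := ih hk i h
      have hr : 0 < a ⟨k, hk⟩ t.succ / a ⟨k, hk⟩ t.castSucc :=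
        div_pos (ha.1 _ _) (ha.1 _ _)
      nlinarith [mul_pos (sub_pos.2 hq) hr]
    · have : i = ⟨k, hk⟩ := Fin.ext (show (i:ℕ) = k by omega)
      subst this
      exact hstep

private lemma fseq_pos' (ha : OrdQInc q a) (t : Fin d) (i j : Fin n) : 0 < fseq a t i j :=
  div_pos (mul_pos (ha.1 _ _) (ha.1 _ _)) (mul_pos (ha.1 _ _) (ha.1 _ _))

private lemma fseq_mul' (ha : OrdQInc q a) (t : Fin d) (i j k : Fin n) :
    fseq a t i j * fseq a t j k = fseq a t i k := by
  unfold fseq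
  have h1 := (ha.1 j t.succ).ne'
  have h2 := (ha.1 j t.castSucc).ne'
  have h3 := (ha.1 i t.succ).ne'
  have h4 := (ha.1 i t.castSucc).ne'
  have h5 := (ha.1 k t.succ).ne'
  have h6 := (ha.1 k t.castSucc).ne'
  field_simp

private lemma fseq_self (ha : OrdQInc q a) (t : Fin d) (i : Fin n) : fseq a t i i = 1 := by
  unfold fseq
  rw [mul_comm, div_self (mul_pos (ha.1 _ _) (ha.1 _ _)).ne']

private lemma q_lt_fseq (hq : 1 < q) (ha : OrdQInc q a) (t : Fin d) {i j : Fin n}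
    (h : i < j) : q < fseq a t i j := by
  have hlt := rr_lt_aux hq ha t (j : ℕ) j.isLt i (Fin.lt_def.mp h)
  have hi : 0 < a i t.succ / a i t.castSucc := div_pos (ha.1 _ _) (ha.1 _ _)
  have hj0 : (⟨(j : ℕ), j.isLt⟩ : Fin n) = j := Fin.ext rfl
  rw [hj0] at hlt
  have heq : fseq a t i j = (a j t.succ / a j t.castSucc) / (a i t.succ / a i t.castSucc) := by
    unfold fseq
    field_simp
  rw [heq, lt_div_iff₀ hi]
  linarith

private lemma one_le_fseq (hq : 1 < q) (ha : OrdQInc q a) (t : Fin d) {i j : Fin n}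
    (h : i ≤ j) : 1 ≤ fseq a t i j := by
  rcases eq_or_lt_of_le h with rfl | h
  · exact (fseq_self ha t i).ge
  · exact le_of_lt (lt_trans hq (q_lt_fseq hq ha t h))

private lemma fseq_le_one (hq : 1 < q) (ha : OrdQInc q a) (t : Fin d) {i j : Fin n}
    (h : j ≤ i) : fseq a t i j ≤ 1 := by
  have h1 := one_le_fseq hq ha t h
  have h2 := fseq_mul' ha t i j i
  rw [fseq_self ha t i] at h2
  nlinarith [fseq_pos' ha t i j]

private lemma fseq_mono_right (hq : 1 < q) (ha : OrdQInc q a) (t : Fin d) {i j k : Fin n}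
    (h : j ≤ k) : fseq a t i j ≤ fseq a t i k := by
  rw [← fseq_mul' ha t i j k]
  nlinarith [fseq_pos' ha t i j, one_le_fseq hq ha t h]

private lemma fseq_anti_left (hq : 1 < q) (ha : OrdQInc q a) (t : Fin d) {i j k : Fin n}
    (h : i ≤ j) : fseq a t j k ≤ fseq a t i k := by
  rw [← fseq_mul' ha t i j k]
  nlinarith [fseq_pos' ha t j k, one_le_fseq hq ha t h]

end helpers
section prodlem
variable {q : ℝ} {d n : ℕ} {a : Fin n → Fin (d + 1) → ℝ}

private lemma prod_bad_le (hq : 1 < q) (ha : OrdQInc q a) (τ : Fin d) (g : Fin d → ℝ)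
    (b : ℕ) :
    ∀ B : Finset (Fin d),
      (∀ s ∈ B, 0 < g s) →
      (∀ s ∈ B, ∀ (c : ℕ) (hc : c + 1 < n), b ≤ c → c + 1 ≤ b + B.card →
          q < g s * fseq a τ ⟨c, by omega⟩ ⟨c + 1, hc⟩) →
      ∀ bi bj : Fin n, (bi : ℕ) = b → (bj : ℕ) = b + B.card →
        q ^ B.card ≤ (∏ s ∈ B, g s) * fseq a τ bi bj := by
  classical
  intro B
  induction B using Finset.induction_on with
  | empty =>
    intro _ _ bi bj hbi hbj
    have : bi = bj := Fin.ext (by simp at hbj; omega)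
    subst this
    simp [fseq_self ha]
  | @insert s B' hs ih =>
    intro hpos hg bi bj hbi hbj
    have hcard : (insert s B').card = B'.card + 1 := Finset.card_insert_of_notMem hs
    rw [hcard] at hbj
    have hmidlt : b + B'.card < n := by omega
    set mid : Fin n := ⟨b + B'.card, hmidlt⟩ with hmid
    have ih' := ih (fun t ht => hpos t (Finset.mem_insert_of_mem ht))
      (fun t ht c hc h1 h2 => hg t (Finset.mem_insert_of_mem ht) c hc h1 (by omega))
      bi mid hbi rfl
    have hnew : q < g s * fseq a τ mid bj := by
      have hc : b + B'.card + 1 < n := by omega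
      have := hg s (Finset.mem_insert_self s B') (b + B'.card) hc (by omega) (by omega)
      have hbj' : bj = ⟨b + B'.card + 1, hc⟩ := Fin.ext (show (bj:ℕ) = b + B'.card + 1 by omega)
      rw [hbj']
      exact this
    rw [Finset.prod_insert hs, hcard, pow_succ]
    have hX : 0 ≤ (∏ t ∈ B', g t) * fseq a τ bi mid :=
      le_trans (by positivity) ih'
    have := mul_le_mul ih' (le_of_lt hnew) (by positivity) hX
    calc q ^ B'.card * q ≤ ((∏ t ∈ B', g t) * fseq a τ bi mid) * (g s * fseq a τ mid bj) := this
      _ = g s * (∏ t ∈ B', g t) * (fseq a τ bi mid * fseq a τ mid bj) := by ring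
      _ = g s * (∏ t ∈ B', g t) * fseq a τ bi bj := by rw [fseq_mul' ha]

private lemma prod_bad_le2 (hq : 1 < q) (ha : OrdQInc q a) (τ : Fin d) (g : Fin d → ℝ)
    (b : ℕ) :
    ∀ B : Finset (Fin d),
      (∀ s ∈ B, 0 < g s) →
      (∀ s ∈ B, ∀ (c : ℕ) (hc : c + 1 < n), b ≤ c → c + 1 ≤ b + B.card →
          q * g s < fseq a τ ⟨c, by omega⟩ ⟨c + 1, hc⟩) →
      ∀ bi bj : Fin n, (bi : ℕ) = b → (bj : ℕ) = b + B.card →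
        q ^ B.card * (∏ s ∈ B, g s) ≤ fseq a τ bi bj := by
  classical
  intro B
  induction B using Finset.induction_on with
  | empty =>
    intro _ _ bi bj hbi hbj
    have : bi = bj := Fin.ext (by simp at hbj; omega)
    subst this
    simp [fseq_self ha]
  | @insert s B' hs ih =>
    intro hpos hg bi bj hbi hbj
    have hcard : (insert s B').card = B'.card + 1 := Finset.card_insert_of_notMem hs
    rw [hcard] at hbj
    have hmidlt : b + B'.card < n := by omega
    set mid : Fin n := ⟨b + B'.card, hmidlt⟩ with hmid
    have ih' := ih (fun t ht => hpos t (Finset.mem_insert_of_mem ht))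
      (fun t ht c hc h1 h2 => hg t (Finset.mem_insert_of_mem ht) c hc h1 (by omega))
      bi mid hbi rfl
    have hnew : q * g s < fseq a τ mid bj := by
      have hc : b + B'.card + 1 < n := by omega
      have := hg s (Finset.mem_insert_self s B') (b + B'.card) hc (by omega) (by omega)
      have hbj' : bj = ⟨b + B'.card + 1, hc⟩ := Fin.ext (show (bj:ℕ) = b + B'.card + 1 by omega)
      rw [hbj']
      exact this
    rw [Finset.prod_insert hs, hcard, pow_succ]
    have hq0 : (0:ℝ) < q := lt_trans one_pos hq
    have h0 : 0 ≤ q * g s := le_of_lt (mul_pos hq0 (hpos s (Finset.mem_insert_self s B')))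
    have h1 : 0 ≤ fseq a τ bi mid := le_of_lt (fseq_pos' ha τ bi mid)
    have := mul_le_mul ih' (le_of_lt hnew) h0 h1
    calc q ^ B'.card * q * (g s * ∏ t ∈ B', g t)
        = (q ^ B'.card * ∏ t ∈ B', g t) * (q * g s) := by ring
      _ ≤ fseq a τ bi mid * fseq a τ mid bj := this
      _ = fseq a τ bi bj := fseq_mul' ha τ bi mid bj
end prodlem
/-- Key lemma: let `a` be a dominant ordered `q`-increasing `(d+1)`-dimensional
sequence, `S ⊆ {1,...,d}` nonempty, `τ` the `⊢`-greatest element of `S`, and let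
indices `i_s, j_s` be given for `s ∈ S` with `|i_τ - j_τ| ≥ |S|` and both families
monotone along `S`.  Then `Π_{s ∈ S} f_a(s, i_s, j_s) > q` if `i_τ < j_τ`, and
`< 1/q` if `i_τ > j_τ`. -/
theorem crux_lemma (q : ℝ) (hq : 1 < q) (d n : ℕ)
    (a : Fin n → Fin (d + 1) → ℝ) (ha : OrdQInc q a)
    (hld : LeftDominant q a) (hrd : RightDominant q a)
    (S : Finset (Fin d)) (hS : S.Nonempty)
    (τ : Fin d) (hτS : τ ∈ S) (hτmax : ∀ s ∈ S, s ≠ τ → Vdash q a s τ)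
    (i j : Fin d → Fin n)
    (hgap : S.card ≤ (((i τ : ℕ) : ℤ) - ((j τ : ℕ) : ℤ)).natAbs)
    (hmono : ∀ s ∈ S, ∀ t ∈ S, s < t → i s ≤ i t ∧ j s ≤ j t) :
    (i τ < j τ → q < ∏ s ∈ S, fseq a s (i s) (j s)) ∧
    (j τ < i τ → ∏ s ∈ S, fseq a s (i s) (j s) < 1 / q) := by
  classical
  have hq0 : (0:ℝ) < q := lt_trans one_pos hq
  have hUL : ∀ s ∈ S, s < τ → ∀ x y z : Fin n, x < y → y < z →
      q * fseq a s x y < fseq a τ y z := by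
    intro s hs hlt x y z h1 h2
    rcases hτmax s hs (ne_of_lt hlt) with hp | ⟨hr, _⟩ | ⟨_, hgt⟩
    · exact (hp.2 x y z h1 h2).2
    · exact (hr.2 x y z h1 h2).2
    · exact absurd hgt (not_lt.2 hlt.le)
  have hUR : ∀ s ∈ S, τ < s → ∀ x y z : Fin n, x < y → y < z →
      q * fseq a s y z < fseq a τ x y := by
    intro s hs hlt x y z h1 h2
    rcases hτmax s hs (ne_of_gt hlt) with hp | ⟨_, hlt'⟩ | ⟨hl, _⟩
    · exact (hp.2 x y z h1 h2).1
    · exact absurd hlt' (not_lt.2 hlt.le)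
    · exact (hl.2 x y z h1 h2).2
  set F : Fin d → ℝ := fun s => fseq a s (i s) (j s) with hF
  constructor
  · -- case i τ < j τ
    intro hij
    have hij' : (i τ : ℕ) < (j τ : ℕ) := Fin.lt_def.mp hij
    have hjn : (j τ : ℕ) < n := (j τ).isLt
    have hgap' : (i τ : ℕ) + S.card ≤ (j τ : ℕ) := by omega
    set B : Finset (Fin d) := (S.erase τ).filter (fun s => j s < i s) with hB
    set G : Finset (Fin d) := (S.erase τ).filter (fun s => ¬ j s < i s) with hG
    have hBS : B ⊆ S := (Finset.filter_subset _ _).trans (Finset.erase_subset _ _)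
    have hτB : τ ∉ B := fun h => (Finset.mem_erase.1 (Finset.mem_filter.1 h).1).1 rfl
    have hu : B.card < S.card :=
      Finset.card_lt_card ((Finset.ssubset_iff_of_subset hBS).mpr ⟨τ, hτS, hτB⟩)
    have hmidlt : (i τ : ℕ) + B.card < n := by omega
    have hg : ∀ s ∈ B, ∀ (c : ℕ) (hc : c + 1 < n), (i τ : ℕ) ≤ c →
        c + 1 ≤ (i τ : ℕ) + B.card →
        q < F s * fseq a τ ⟨c, by omega⟩ ⟨c + 1, hc⟩ := by
      intro s hsB c hc hc1 hc2
      obtain ⟨hsT, hbad⟩ := Finset.mem_filter.1 hsB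
      obtain ⟨hsne, hsS⟩ := Finset.mem_erase.1 hsT
      have hbadv : (j s : ℕ) < (i s : ℕ) := Fin.lt_def.mp hbad
      have hrev : F s * fseq a s (j s) (i s) = 1 := by
        rw [hF]; dsimp only; rw [fseq_mul' ha, fseq_self ha]
      have hFpos : 0 < F s := fseq_pos' ha s (i s) (j s)
      have hCpos : 0 < fseq a τ ⟨c, by omega⟩ ⟨c + 1, hc⟩ := fseq_pos' ha _ _ _
      have hchunk : q * fseq a s (j s) (i s) < fseq a τ ⟨c, by omega⟩ ⟨c + 1, hc⟩ := by
        rcases lt_or_gt_of_ne hsne with hlt | hgt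
        · have hisv : (i s : ℕ) ≤ (i τ : ℕ) := Fin.le_def.mp (hmono s hsS τ hτS hlt).1
          have h1 : q * fseq a s (j s) ⟨c, by omega⟩ < fseq a τ ⟨c, by omega⟩ ⟨c + 1, hc⟩ :=
            hUL s hsS hlt _ _ _ (Fin.lt_def.mpr (show (j s : ℕ) < c by omega))
              (Fin.lt_def.mpr (show c < c + 1 by omega))
          have h2 : fseq a s (j s) (i s) ≤ fseq a s (j s) ⟨c, by omega⟩ :=
            fseq_mono_right hq ha s (Fin.le_def.mpr (show (i s : ℕ) ≤ c by omega))
          nlinarith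
        · have hjsv : (j τ : ℕ) ≤ (j s : ℕ) := Fin.le_def.mp (hmono τ hτS s hsS hgt).2
          have h1 : q * fseq a s ⟨c + 1, hc⟩ (i s) < fseq a τ ⟨c, by omega⟩ ⟨c + 1, hc⟩ :=
            hUR s hsS hgt _ _ _ (Fin.lt_def.mpr (show c < c + 1 by omega))
              (Fin.lt_def.mpr (show c + 1 < (i s : ℕ) by omega))
          have h2 : fseq a s (j s) (i s) ≤ fseq a s ⟨c + 1, hc⟩ (i s) :=
            fseq_anti_left hq ha s (Fin.le_def.mpr (show c + 1 ≤ (j s : ℕ) by omega))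
          nlinarith
      nlinarith [mul_pos hFpos hCpos]
    have hBineq := prod_bad_le hq ha τ F (i τ : ℕ) B
      (fun s _ => fseq_pos' ha s (i s) (j s)) hg (i τ) ⟨(i τ : ℕ) + B.card, hmidlt⟩ rfl rfl
    have hGone : (1:ℝ) ≤ ∏ s ∈ G, F s := by
      have h := Finset.prod_le_prod (s := G) (f := fun _ : Fin d => (1:ℝ)) (g := F)
        (fun _ _ => zero_le_one) (fun s hs => ?_)
      · simpa using h
      · obtain ⟨_, hgood⟩ := Finset.mem_filter.1 hs
        exact one_le_fseq hq ha s (le_of_not_gt hgood)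
    have hsplit : F τ * ((∏ s ∈ B, F s) * (∏ s ∈ G, F s)) = ∏ s ∈ S, F s := by
      rw [hB, hG, Finset.prod_filter_mul_prod_filter_not, Finset.mul_prod_erase S F hτS]
    set mid : Fin n := ⟨(i τ : ℕ) + B.card, hmidlt⟩ with hmidd
    have hFτ : F τ = fseq a τ (i τ) mid * fseq a τ mid (j τ) := (fseq_mul' ha τ _ _ _).symm
    have hF2 : q < fseq a τ mid (j τ) :=
      q_lt_fseq hq ha τ (Fin.lt_def.mpr (show (i τ : ℕ) + B.card < (j τ : ℕ) by omega))
    have hq1 : (1:ℝ) ≤ q ^ B.card := one_le_pow₀ hq.le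
    have hPBX : (1:ℝ) ≤ (∏ s ∈ B, F s) * fseq a τ (i τ) mid := le_trans hq1 hBineq
    have hXpos : 0 < fseq a τ (i τ) mid := fseq_pos' ha _ _ _
    have hYpos : 0 < fseq a τ mid (j τ) := fseq_pos' ha _ _ _
    have hPBpos : 0 < ∏ s ∈ B, F s := Finset.prod_pos (fun s _ => fseq_pos' ha s (i s) (j s))
    have step2 : q < ((∏ s ∈ B, F s) * fseq a τ (i τ) mid) * fseq a τ mid (j τ) :=
      lt_of_lt_of_le hF2 (le_mul_of_one_le_left hYpos.le hPBX)
    have step3 : ((∏ s ∈ B, F s) * fseq a τ (i τ) mid) * fseq a τ mid (j τ) ≤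
        (((∏ s ∈ B, F s) * fseq a τ (i τ) mid) * fseq a τ mid (j τ)) * (∏ s ∈ G, F s) :=
      le_mul_of_one_le_right (by positivity) hGone
    calc q < (((∏ s ∈ B, F s) * fseq a τ (i τ) mid) * fseq a τ mid (j τ)) * (∏ s ∈ G, F s) :=
          lt_of_lt_of_le step2 step3
      _ = F τ * ((∏ s ∈ B, F s) * (∏ s ∈ G, F s)) := by rw [hFτ]; ring
      _ = ∏ s ∈ S, F s := hsplit
  · -- case j τ < i τ
    intro hji
    have hji' : (j τ : ℕ) < (i τ : ℕ) := Fin.lt_def.mp hji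
    have hin : (i τ : ℕ) < n := (i τ).isLt
    have hgap' : (j τ : ℕ) + S.card ≤ (i τ : ℕ) := by omega
    set B : Finset (Fin d) := (S.erase τ).filter (fun s => i s < j s) with hB
    set G : Finset (Fin d) := (S.erase τ).filter (fun s => ¬ i s < j s) with hG
    have hBS : B ⊆ S := (Finset.filter_subset _ _).trans (Finset.erase_subset _ _)
    have hτB : τ ∉ B := fun h => (Finset.mem_erase.1 (Finset.mem_filter.1 h).1).1 rfl
    have hu : B.card < S.card :=
      Finset.card_lt_card ((Finset.ssubset_iff_of_subset hBS).mpr ⟨τ, hτS, hτB⟩)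
    have hmidlt : (j τ : ℕ) + B.card < n := by omega
    have hg : ∀ s ∈ B, ∀ (c : ℕ) (hc : c + 1 < n), (j τ : ℕ) ≤ c →
        c + 1 ≤ (j τ : ℕ) + B.card →
        q * F s < fseq a τ ⟨c, by omega⟩ ⟨c + 1, hc⟩ := by
      intro s hsB c hc hc1 hc2
      obtain ⟨hsT, hbad⟩ := Finset.mem_filter.1 hsB
      obtain ⟨hsne, hsS⟩ := Finset.mem_erase.1 hsT
      have hbadv : (i s : ℕ) < (j s : ℕ) := Fin.lt_def.mp hbad
      rcases lt_or_gt_of_ne hsne with hlt | hgt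
      · have hjsv : (j s : ℕ) ≤ (j τ : ℕ) := Fin.le_def.mp (hmono s hsS τ hτS hlt).2
        have h1 : q * fseq a s (i s) ⟨c, by omega⟩ < fseq a τ ⟨c, by omega⟩ ⟨c + 1, hc⟩ :=
          hUL s hsS hlt _ _ _ (Fin.lt_def.mpr (show (i s : ℕ) < c by omega))
            (Fin.lt_def.mpr (show c < c + 1 by omega))
        have h2 : F s ≤ fseq a s (i s) ⟨c, by omega⟩ :=
          fseq_mono_right hq ha s (Fin.le_def.mpr (show (j s : ℕ) ≤ c by omega))
        nlinarith
      · have hisv : (i τ : ℕ) ≤ (i s : ℕ) := Fin.le_def.mp (hmono τ hτS s hsS hgt).1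
        have h1 : q * fseq a s ⟨c + 1, hc⟩ (j s) < fseq a τ ⟨c, by omega⟩ ⟨c + 1, hc⟩ :=
          hUR s hsS hgt _ _ _ (Fin.lt_def.mpr (show c < c + 1 by omega))
            (Fin.lt_def.mpr (show c + 1 < (j s : ℕ) by omega))
        have h2 : F s ≤ fseq a s ⟨c + 1, hc⟩ (j s) :=
          fseq_anti_left hq ha s (Fin.le_def.mpr (show c + 1 ≤ (i s : ℕ) by omega))
        nlinarith
    have hBineq := prod_bad_le2 hq ha τ F (j τ : ℕ) B
      (fun s _ => fseq_pos' ha s (i s) (j s)) hg (j τ) ⟨(j τ : ℕ) + B.card, hmidlt⟩ rfl rfl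
    have hGle : ∏ s ∈ G, F s ≤ 1 := by
      refine Finset.prod_le_one (fun s _ => (fseq_pos' ha s (i s) (j s)).le) (fun s hs => ?_)
      obtain ⟨_, hgood⟩ := Finset.mem_filter.1 hs
      exact fseq_le_one hq ha s (le_of_not_gt hgood)
    have hsplit : F τ * ((∏ s ∈ B, F s) * (∏ s ∈ G, F s)) = ∏ s ∈ S, F s := by
      rw [hB, hG, Finset.prod_filter_mul_prod_filter_not, Finset.mul_prod_erase S F hτS]
    set mid : Fin n := ⟨(j τ : ℕ) + B.card, hmidlt⟩ with hmidd
    have hXY : fseq a τ mid (i τ) * fseq a τ (j τ) mid = fseq a τ (j τ) (i τ) := by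
      rw [mul_comm]; exact fseq_mul' ha τ _ _ _
    have hrevτ : F τ * fseq a τ (j τ) (i τ) = 1 := by
      rw [hF]; dsimp only; rw [fseq_mul' ha, fseq_self ha]
    have hYf : q < fseq a τ mid (i τ) :=
      q_lt_fseq hq ha τ (Fin.lt_def.mpr (show (j τ : ℕ) + B.card < (i τ : ℕ) by omega))
    have hq1 : (1:ℝ) ≤ q ^ B.card := one_le_pow₀ hq.le
    have hXpos : 0 < fseq a τ (j τ) mid := fseq_pos' ha _ _ _
    have hYpos : 0 < fseq a τ mid (i τ) := fseq_pos' ha _ _ _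
    have hPBpos : 0 < ∏ s ∈ B, F s := Finset.prod_pos (fun s _ => fseq_pos' ha s (i s) (j s))
    have hPGpos : 0 < ∏ s ∈ G, F s := Finset.prod_pos (fun s _ => fseq_pos' ha s (i s) (j s))
    have hFτpos : 0 < F τ := fseq_pos' ha τ (i τ) (j τ)
    -- key: q * PB * PG < Xf * Yf
    have hkey : q * ((∏ s ∈ B, F s) * (∏ s ∈ G, F s)) < fseq a τ (j τ) mid * fseq a τ mid (i τ) := by
      have t1 : (0:ℝ) ≤ q * (∏ s ∈ B, F s) := (mul_pos hq0 hPBpos).le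
      have e1 := mul_le_mul_of_nonneg_left hGle t1
      have e2 : (0:ℝ) ≤ (q ^ B.card - 1) * (q * ∏ s ∈ B, F s) := mul_nonneg (by linarith) t1
      have e3 := mul_le_mul_of_nonneg_left hBineq hq0.le
      have e4 := mul_lt_mul_of_pos_left hYf hXpos
      nlinarith [e1, e2, e3, e4]
    rw [← hsplit, lt_div_iff₀ hq0]
    calc F τ * ((∏ s ∈ B, F s) * (∏ s ∈ G, F s)) * q
        = (q * ((∏ s ∈ B, F s) * (∏ s ∈ G, F s))) * F τ := by ring
      _ < (fseq a τ (j τ) mid * fseq a τ mid (i τ)) * F τ := by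
          exact mul_lt_mul_of_pos_right hkey hFτpos
      _ = F τ * fseq a τ (j τ) (i τ) := by rw [← hXY]; ring
      _ = 1 := hrevτ
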